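/- Let 1 ≤ d₁ < d₂ ≤ 2(q−1) and let k₁ = dim RM_{d₁−1}(q,2). If d₁ ≡ d₂ (mod q−1), then dim(PRM_{d₁}(q,2) ∩ PRM_{d₂}(q,2)) = dim PRM_{d₁}(q,2). If d₁ ≢ d₂ (mod q−1), then dim(PRM_{d₁}(q,2) ∩ PRM_{d₂}(q,2)) equals: k₁ if d₂ ≤ q−1; k₁ + min{d₁, d₂−(q−1)} if d₁ ≤ q−1 < d₂; and k₁ + d₂ − q + 2 if q ≤ d₁. -/

import Mathlib

open MvPolynomial

/-- The fixed representatives of the points of the projective plane over `F`: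
the leftmost nonzero coordinate equals 1. -/
def stdRep (F : Type*) [Field F] : Set (Fin 3 → F) :=
  {v | v 0 = 1 ∨ (v 0 = 0 ∧ v 1 = 1) ∨ (v 0 = 0 ∧ v 1 = 0 ∧ v 2 = 1)}

/-- The evaluation map at the fixed representatives. -/
noncomputable def ev (F : Type*) [Field F] :
    MvPolynomial (Fin 3) F →ₗ[F] (stdRep F → F) :=
  LinearMap.pi fun Q => (aeval (Q : Fin 3 → F)).toLinearMap

/-- The projective Reed–Muller code of degree `d` over the projective plane. -/
noncomputable def PRM (F : Type*) [Field F] (d : ℕ) : Submodule F (stdRep F → F) :=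
  (homogeneousSubmodule (Fin 3) F d).map (ev F)

/-- Evaluation of bivariate polynomials at all points of the affine plane. -/
noncomputable def evA (F : Type*) [Field F] :
    MvPolynomial (Fin 2) F →ₗ[F] ((Fin 2 → F) → F) :=
  LinearMap.pi fun Q => (aeval Q).toLinearMap

/-- The affine Reed–Muller code of degree `e` in two variables. -/
noncomputable def RM (F : Type*) [Field F] (e : ℕ) : Submodule F ((Fin 2 → F) → F) :=
  (restrictTotalDegree (Fin 2) F e).map (evA F)

set_option linter.unusedSectionVars false
set_option maxHeartbeats 1000000
set_option synthInstance.maxHeartbeats 400000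

namespace S7

/-! ### Finsupp helpers -/

noncomputable def m2 (a b : ℕ) : Fin 2 →₀ ℕ := Finsupp.equivFunOnFinite.symm ![a, b]

noncomputable def fin3 (a b c : ℕ) : Fin 3 →₀ ℕ := Finsupp.equivFunOnFinite.symm ![a, b, c]

@[simp] lemma m2_apply_zero (a b : ℕ) : m2 a b 0 = a := rfl
@[simp] lemma m2_apply_one (a b : ℕ) : m2 a b 1 = b := rfl
@[simp] lemma fin3_apply_zero (a b c : ℕ) : fin3 a b c 0 = a := rfl
@[simp] lemma fin3_apply_one (a b c : ℕ) : fin3 a b c 1 = b := rfl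
@[simp] lemma fin3_apply_two (a b c : ℕ) : fin3 a b c 2 = c := rfl

lemma m2_eta (m : Fin 2 →₀ ℕ) : m2 (m 0) (m 1) = m := by
  ext i; fin_cases i <;> rfl

lemma fin3_eta (m : Fin 3 →₀ ℕ) : fin3 (m 0) (m 1) (m 2) = m := by
  ext i; fin_cases i <;> rfl

lemma m2_inj {a b a' b' : ℕ} (h : m2 a b = m2 a' b') : a = a' ∧ b = b' :=
  ⟨by simpa using DFunLike.congr_fun h 0, by simpa using DFunLike.congr_fun h 1⟩

lemma degree2 (m : Fin 2 →₀ ℕ) : m.degree = m 0 + m 1 := by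
  rw [Finsupp.degree_apply, Finset.sum_subset (Finset.subset_univ _)
    (by intro i _ hi; exact Finsupp.notMem_support_iff.mp hi)]
  exact Fin.sum_univ_two m

lemma degree3 (m : Fin 3 →₀ ℕ) : m.degree = m 0 + m 1 + m 2 := by
  rw [Finsupp.degree_apply, Finset.sum_subset (Finset.subset_univ _)
    (by intro i _ hi; exact Finsupp.notMem_support_iff.mp hi)]
  exact Fin.sum_univ_three m

lemma sum2 (m : Fin 2 →₀ ℕ) : (m.sum fun _ e => e) = m 0 + m 1 := by
  rw [Finsupp.sum_fintype _ _ (fun _ => rfl)]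
  exact Fin.sum_univ_two m

@[simp] lemma m2_degree (a b : ℕ) : (m2 a b).degree = a + b := by
  rw [degree2]; rfl

variable {F : Type*} [Field F] [Fintype F]

/-! ### Points -/

def aff (p : Fin 2 → F) : ↥(stdRep F) := ⟨![1, p 0, p 1], Or.inl rfl⟩

def lpt : Option F → ↥(stdRep F)
  | some a => ⟨![0, 1, a], Or.inr (Or.inl ⟨rfl, rfl⟩)⟩
  | none => ⟨![0, 0, 1], Or.inr (Or.inr ⟨rfl, rfl, rfl⟩)⟩

lemma vec2_eta (p : Fin 2 → F) : ![p 0, p 1] = p := by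
  funext i; fin_cases i <;> rfl

lemma stdRep_cases (v : ↥(stdRep F)) : (∃ p, v = aff p) ∨ (∃ o, v = lpt o) := by
  obtain ⟨w, hw⟩ := v
  rcases hw with h | ⟨h0, h1⟩ | ⟨h0, h1, h2⟩
  · refine Or.inl ⟨![w 1, w 2], ?_⟩
    apply Subtype.ext
    funext i; fin_cases i <;> simp [aff, h]
  · refine Or.inr ⟨some (w 2), ?_⟩
    apply Subtype.ext
    funext i; fin_cases i <;> simp [lpt, h0, h1]
  · refine Or.inr ⟨none, ?_⟩
    apply Subtype.ext
    funext i; fin_cases i <;> simp [lpt, h0, h1, h2]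

noncomputable def resA : (↥(stdRep F) → F) →ₗ[F] ((Fin 2 → F) → F) :=
  LinearMap.funLeft F F aff

noncomputable def resL : (↥(stdRep F) → F) →ₗ[F] (Option F → F) :=
  LinearMap.funLeft F F lpt

@[simp] lemma resA_apply (u : ↥(stdRep F) → F) (p : Fin 2 → F) : resA u p = u (aff p) := rfl
@[simp] lemma resL_apply (u : ↥(stdRep F) → F) (o : Option F) : resL u o = u (lpt o) := rfl

open scoped Classical in
noncomputable def glue (w : (Fin 2 → F) → F) (φ : Option F → F) : ↥(stdRep F) → F :=
  fun v => if v.1 0 = 1 then w ![v.1 1, v.1 2] else if v.1 1 = 1 then φ (some (v.1 2)) else φ none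

@[simp] lemma glue_aff (w : (Fin 2 → F) → F) (φ : Option F → F) (p : Fin 2 → F) :
    glue w φ (aff p) = w p := by
  simp only [glue, aff]
  simp only [Matrix.cons_val_zero, eq_self_iff_true, if_true]
  congr 1
  funext i; fin_cases i <;> simp

@[simp] lemma glue_some (w : (Fin 2 → F) → F) (φ : Option F → F) (a : F) :
    glue w φ (lpt (some a)) = φ (some a) := by
  simp only [glue, lpt]
  simp only [Matrix.cons_val_zero, Matrix.cons_val_one, Matrix.head_cons, zero_ne_one,
    if_false, eq_self_iff_true, if_true]
  congr 1

@[simp] lemma glue_none (w : (Fin 2 → F) → F) (φ : Option F → F) :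
    glue w φ (lpt none) = φ none := by
  simp only [glue, lpt]
  simp only [Matrix.cons_val_zero, Matrix.cons_val_one, Matrix.head_cons, zero_ne_one,
    if_false]

lemma func_eq (u u' : ↥(stdRep F) → F) (hA : ∀ p, u (aff p) = u' (aff p))
    (hL : ∀ o, u (lpt o) = u' (lpt o)) : u = u' := by
  funext v
  rcases stdRep_cases v with ⟨p, rfl⟩ | ⟨o, rfl⟩
  exacts [hA p, hL o]

/-! ### The line code -/

local notation "qq" => Fintype.card F

noncomputable def LMap (n : ℕ) : (Fin (n + 1) → F) →ₗ[F] (Option F → F) where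
  toFun c o := match o with
    | some a => ∑ j : Fin (n + 1), c j * a ^ (j : ℕ)
    | none => c (Fin.last n)
  map_add' c c' := by
    funext o; cases o <;> simp [add_mul, Finset.sum_add_distrib]
  map_smul' r c := by
    funext o; cases o <;> simp [Finset.mul_sum, mul_assoc]

@[simp] lemma LMap_some (n : ℕ) (c : Fin (n + 1) → F) (a : F) :
    LMap n c (some a) = ∑ j : Fin (n + 1), c j * a ^ (j : ℕ) := rfl

@[simp] lemma LMap_none (n : ℕ) (c : Fin (n + 1) → F) :
    LMap n c none = c (Fin.last n) := rfl

lemma coeffs_eq_zero {N : ℕ} (hN : N ≤ qq) (c : ℕ → F)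
    (h : ∀ a : F, ∑ j ∈ Finset.range N, c j * a ^ j = 0) : ∀ j < N, c j = 0 := by
  rcases Nat.eq_zero_or_pos N with rfl | hN0
  · omega
  set p : Polynomial F := ∑ j ∈ Finset.range N, Polynomial.C (c j) * Polynomial.X ^ j with hp
  have hdeg : p.natDegree < qq := by
    have : p.natDegree ≤ N - 1 := by
      apply Polynomial.natDegree_sum_le_of_forall_le
      intro i hi
      refine (Polynomial.natDegree_C_mul_le _ _).trans ?_
      simp only [Polynomial.natDegree_X_pow]
      have := Finset.mem_range.mp hi; omega
    omega
  have hzero : p = 0 := by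
    apply Polynomial.eq_zero_of_natDegree_lt_card_of_eval_eq_zero p Function.injective_id _
    · simpa using hdeg
    · intro a
      simpa [hp, Polynomial.eval_finset_sum] using h a
  intro j hj
  have := congrArg (fun r => Polynomial.coeff r j) hzero
  simp only [hp, Polynomial.finset_sum_coeff, Polynomial.coeff_C_mul, Polynomial.coeff_X_pow,
    Polynomial.coeff_zero, mul_ite, mul_one, mul_zero] at this
  rwa [Finset.sum_ite_eq (Finset.range N) j c, if_pos (Finset.mem_range.mpr hj)] at this

lemma LMap_inj {n : ℕ} (hn : n + 1 ≤ qq) : Function.Injective (LMap (F := F) n) := by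
  rw [← LinearMap.ker_eq_bot]
  rw [Submodule.eq_bot_iff]
  intro c hc
  rw [LinearMap.mem_ker] at hc
  set c' : ℕ → F := fun j => if h : j < n + 1 then c ⟨j, h⟩ else 0 with hc'
  have hz : ∀ j < n + 1, c' j = 0 := by
    apply coeffs_eq_zero hn
    intro a
    have h1 : ∑ j ∈ Finset.range (n + 1), c' j * a ^ j
        = ∑ j : Fin (n + 1), c j * a ^ (j : ℕ) := by
      rw [← Fin.sum_univ_eq_sum_range]
      apply Finset.sum_congr rfl
      intro j _
      simp [hc', Fin.is_le j, Nat.not_lt.mpr (Fin.is_le j)]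
    rw [h1]
    exact congrFun hc (some a)
  funext j
  have := hz j j.isLt
  simpa [hc', Fin.is_le j] using this

lemma LMap_surj {n : ℕ} (hn : qq ≤ n) : Function.Surjective (LMap (F := F) n) := by
  intro φ
  classical
  set ψ : F → F := fun a => φ (some a) - φ none * a ^ n with hψ
  set p := Lagrange.interpolate Finset.univ id ψ with hp
  have hpe : ∀ a : F, p.eval a = ψ a := fun a =>
    Lagrange.eval_interpolate_at_node ψ (Set.injOn_id _) (Finset.mem_univ a)
  have hpd : p.degree < (qq : ℕ) := by
    exact (Lagrange.degree_interpolate_lt (s := Finset.univ) ψ (Set.injOn_id _)).trans_eq (by simp)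
  have hpnat : p.natDegree < qq := by
    rcases eq_or_ne p 0 with h0 | hp0
    · rw [h0]; simpa using Fintype.card_pos
    · exact Polynomial.natDegree_lt_iff_degree_lt hp0 |>.mpr (by exact_mod_cast hpd)
  refine ⟨fun j => (if (j : ℕ) = n then φ none else 0) + p.coeff j, ?_⟩
  funext o
  cases o with
  | none =>
    simp only [LMap_none, Fin.val_last, if_pos rfl]
    have : p.coeff n = 0 := Polynomial.coeff_eq_zero_of_natDegree_lt (by omega)
    simp [this]
  | some a =>
    simp only [LMap_some, add_mul]
    rw [Finset.sum_add_distrib]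
    have e1 : ∑ j : Fin (n + 1), (if (j : ℕ) = n then φ none else 0) * a ^ (j : ℕ)
        = φ none * a ^ n := by
      rw [Finset.sum_eq_single (Fin.last n)]
      · simp
      · intro j _ hj
        rw [if_neg, zero_mul]
        intro hjn
        exact hj (by apply Fin.ext; simpa using hjn)
      · simp
    have e2 : ∑ j : Fin (n + 1), p.coeff (j : ℕ) * a ^ (j : ℕ) = ψ a := by
      rw [Fin.sum_univ_eq_sum_range (fun j => p.coeff j * a ^ j), ← hpe a]
      exact (Polynomial.eval_eq_sum_range' (by omega) a).symm
    rw [e1, e2, hψ]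
    ring

lemma fin_sum_dite (N : ℕ) (u : Fin N → F) (g : ℕ → F) :
    ∑ j ∈ Finset.range N, (if h : j < N then u ⟨j, h⟩ else 0) * g j
      = ∑ j : Fin N, u j * g (j : ℕ) := by
  rw [← Fin.sum_univ_eq_sum_range (fun j => (if h : j < N then u ⟨j, h⟩ else 0) * g j) N]
  exact Finset.sum_congr rfl fun j _ => by rw [dif_pos j.isLt]

lemma sums_eq {c D : ℕ} (hcD : c ≤ D) (hD : D + 1 ≤ qq) (u : Fin (c + 1) → F)
    (v : Fin (D + 1) → F)
    (h : ∀ a : F, ∑ j : Fin (c + 1), u j * a ^ (j : ℕ) = ∑ j : Fin (D + 1), v j * a ^ (j : ℕ)) :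
    ∀ j : Fin (D + 1), v j = if h' : (j : ℕ) < c + 1 then u ⟨j, h'⟩ else 0 := by
  classical
  set w : ℕ → F := fun j =>
    (if h' : j < c + 1 then u ⟨j, h'⟩ else 0) - (if h' : j < D + 1 then v ⟨j, h'⟩ else 0) with hw
  have hz : ∀ j < D + 1, w j = 0 := by
    apply coeffs_eq_zero hD
    intro a
    have e0 : ∑ j ∈ Finset.range (D + 1), w j * a ^ j
        = ∑ j ∈ Finset.range (D + 1), (if h' : j < c + 1 then u ⟨j, h'⟩ else 0) * a ^ j
          - ∑ j ∈ Finset.range (D + 1), (if h' : j < D + 1 then v ⟨j, h'⟩ else 0) * a ^ j := by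
      rw [← Finset.sum_sub_distrib]
      exact Finset.sum_congr rfl fun j _ => by rw [hw]; ring
    have e1 : ∑ j ∈ Finset.range (D + 1), (if h' : j < c + 1 then u ⟨j, h'⟩ else 0) * a ^ j
        = ∑ j : Fin (c + 1), u j * a ^ (j : ℕ) := by
      rw [← Finset.sum_subset (Finset.range_subset_range.mpr (show c + 1 ≤ D + 1 by omega))
        (fun x _ hx => by rw [dif_neg (by simpa using hx), zero_mul])]
      exact fin_sum_dite (c + 1) u (fun j => a ^ j)
    rw [e0, e1, fin_sum_dite (D + 1) v (fun j => a ^ j), h a, sub_self]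
  intro j
  have := hz (j : ℕ) j.isLt
  rw [hw] at this
  simp only [sub_eq_zero] at this
  rw [dif_pos j.isLt] at this
  simpa using this.symm

lemma LMap_range_inf {c D : ℕ} (hcD : c < D) (hD : D + 1 ≤ qq) :
    LinearMap.range (LMap (F := F) c) ⊓ LinearMap.range (LMap (F := F) D)
      = Submodule.map (LMap c) (LinearMap.ker (LinearMap.proj (R := F) (Fin.last c))) := by
  apply le_antisymm
  · rintro φ ⟨⟨u, rfl⟩, ⟨v, hv⟩⟩
    have hs : ∀ a : F, ∑ j : Fin (c + 1), u j * a ^ (j : ℕ)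
        = ∑ j : Fin (D + 1), v j * a ^ (j : ℕ) := by
      intro a
      have := congrFun hv (some a)
      simpa using this.symm
    have hvv := sums_eq (le_of_lt hcD) hD u v hs
    have hnone : u (Fin.last c) = v (Fin.last D) := by
      have := congrFun hv none
      simpa using this.symm
    have hlast : u (Fin.last c) = 0 := by
      rw [hnone, hvv (Fin.last D), dif_neg]
      simp [Fin.last]
      omega
    exact Submodule.mem_map.mpr ⟨u, by simpa [LinearMap.mem_ker] using hlast, rfl⟩
  · rintro φ ⟨u, hu, rfl⟩
    have hlast : u (Fin.last c) = 0 := by simpa [LinearMap.mem_ker] using hu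
    refine ⟨⟨u, rfl⟩, ⟨fun j => if h' : (j : ℕ) < c + 1 then u ⟨j, h'⟩ else 0, ?_⟩⟩
    funext o
    cases o with
    | none =>
      simp only [LMap_none]
      rw [dif_neg (by simp [Fin.last]; omega), hlast]
    | some a =>
      simp only [LMap_some]
      rw [← fin_sum_dite (D + 1) (fun j => if h' : (j : ℕ) < c + 1 then u ⟨j, h'⟩ else 0)
        (fun j => a ^ j)]
      have e1 : ∀ x ∈ Finset.range (D + 1), x ∉ Finset.range (c + 1) →
          (if h : x < D + 1 then (if h' : x < c + 1 then u ⟨x, h'⟩ else 0) else 0) * a ^ x = 0 := by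
        intro x _ hx
        rcases Nat.lt_or_ge x (D + 1) with h1 | h1
        · rw [dif_pos h1, dif_neg (by simpa using hx), zero_mul]
        · rw [dif_neg (by omega), zero_mul]
      rw [← Finset.sum_subset (Finset.range_subset_range.mpr (show c + 1 ≤ D + 1 by omega)) e1]
      rw [← fin_sum_dite (c + 1) u (fun j => a ^ j)]
      apply Finset.sum_congr rfl
      intro x hx
      have hxc : x < c + 1 := Finset.mem_range.mp hx
      rw [dif_pos (show x < D + 1 by omega), dif_pos hxc]

lemma finrank_LMap_range {n : ℕ} (hn : n + 1 ≤ qq) :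
    Module.finrank F ↥(LinearMap.range (LMap (F := F) n)) = n + 1 := by
  rw [LinearMap.finrank_range_of_inj (LMap_inj hn)]
  simp [Module.finrank_pi]

lemma finrank_ker_proj_last (c : ℕ) :
    Module.finrank F ↥(LinearMap.ker (LinearMap.proj (R := F) (φ := fun _ : Fin (c + 1) => F)
      (Fin.last c))) = c := by
  have hsurj : Function.Surjective (LinearMap.proj (R := F) (φ := fun _ : Fin (c + 1) => F)
      (Fin.last c)) := fun x => ⟨fun _ => x, rfl⟩
  have h1 := LinearMap.finrank_range_add_finrank_ker
    (LinearMap.proj (R := F) (φ := fun _ : Fin (c + 1) => F) (Fin.last c))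
  rw [LinearMap.range_eq_top.mpr hsurj, finrank_top] at h1
  simp only [Module.finrank_self, Module.finrank_pi, Fintype.card_fin] at h1
  omega

lemma finrank_LMap_inf {c D : ℕ} (hcD : c < D) (hD : D + 1 ≤ qq) :
    Module.finrank F ↥(LinearMap.range (LMap (F := F) c) ⊓ LinearMap.range (LMap (F := F) D))
      = c := by
  rw [LMap_range_inf hcD hD]
  rw [(Submodule.equivMapOfInjective _ (LMap_inj (by omega)) _).symm.finrank_eq]
  exact finrank_ker_proj_last c

lemma LMap_range_top {n : ℕ} (hn : qq ≤ n) :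
    LinearMap.range (LMap (F := F) n) = ⊤ :=
  LinearMap.range_eq_top.mpr (LMap_surj hn)

/-! ### Polynomial machinery -/

lemma eval_monomial_m2 (p : Fin 2 → F) (a b : ℕ) (c : F) :
    eval p (monomial (m2 a b) c) = c * p 0 ^ a * p 1 ^ b := by
  rw [eval_monomial, Finsupp.prod_fintype _ _ (fun i => pow_zero _), Fin.prod_univ_two]
  simp [mul_assoc]

lemma eval_monomial_2 (p : Fin 2 → F) (m : Fin 2 →₀ ℕ) (c : F) :
    eval p (monomial m c) = c * p 0 ^ m 0 * p 1 ^ m 1 := by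
  rw [← m2_eta m, eval_monomial_m2]
  simp

lemma aeval_monomial_3 {A : Type*} [CommSemiring A] [Algebra F A] (v : Fin 3 → A)
    (m : Fin 3 →₀ ℕ) (c : F) :
    aeval v (monomial m c) = algebraMap F A c * v 0 ^ m 0 * v 1 ^ m 1 * v 2 ^ m 2 := by
  rw [aeval_monomial, Finsupp.prod_fintype _ _ (fun i => pow_zero _), Fin.prod_univ_three]
  ring

noncomputable def dehom (f : MvPolynomial (Fin 3) F) : MvPolynomial (Fin 2) F :=
  aeval ![1, X 0, X 1] f

lemma dehom_monomial (m : Fin 3 →₀ ℕ) (c : F) :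
    dehom (monomial m c) = monomial (m2 (m 1) (m 2)) c := by
  rw [dehom, aeval_monomial_3, monomial_eq, Finsupp.prod_fintype _ _ (fun i => pow_zero _),
    Fin.prod_univ_two]
  simp only [Matrix.cons_val_zero, one_pow, Matrix.cons_val_one, Matrix.head_cons, m2_apply_zero,
    m2_apply_one, Matrix.cons_val_two, Matrix.tail_cons, algebraMap_eq]
  ring

lemma eval_dehom (f : MvPolynomial (Fin 3) F) (p : Fin 2 → F) :
    eval p (dehom f) = aeval ![1, p 0, p 1] f := by
  have hcomp : (aeval p : MvPolynomial (Fin 2) F →ₐ[F] F).comp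
      (aeval ![1, X 0, X 1] : MvPolynomial (Fin 3) F →ₐ[F] MvPolynomial (Fin 2) F)
      = aeval ![1, p 0, p 1] := by
    apply algHom_ext
    intro i
    fin_cases i <;> simp
  have h1 : eval p (dehom f) = aeval p (dehom f) := by
    rw [← coe_aeval_eq_eval]; rfl
  rw [h1, dehom, ← AlgHom.comp_apply, hcomp]

lemma degree_of_mem_support {f : MvPolynomial (Fin 3) F} {d : ℕ} (hf : f.IsHomogeneous d)
    {m : Fin 3 →₀ ℕ} (hm : m ∈ f.support) : m 0 + m 1 + m 2 = d := by
  rw [← degree3 m, Finsupp.degree_eq_weight_one]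
  exact hf (mem_support_iff.mp hm)

lemma degree_of_mem_support2 {f : MvPolynomial (Fin 2) F} {d : ℕ} (hf : f.IsHomogeneous d)
    {m : Fin 2 →₀ ℕ} (hm : m ∈ f.support) : m 0 + m 1 = d := by
  rw [← degree2 m, Finsupp.degree_eq_weight_one]
  exact hf (mem_support_iff.mp hm)

lemma totalDegree_dehom {f : MvPolynomial (Fin 3) F} {d : ℕ} (hf : f.IsHomogeneous d) :
    (dehom f).totalDegree ≤ d := by
  conv_lhs => rw [as_sum f]
  rw [dehom, map_sum]
  refine (totalDegree_finset_sum _ _).trans (Finset.sup_le ?_)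
  intro m hm
  rw [show aeval ![1, X 0, X 1] (monomial m (coeff m f)) = dehom (monomial m (coeff m f)) from rfl,
    dehom_monomial]
  refine (totalDegree_monomial_le _ _).trans ?_
  have h1 : ((m2 (m 1) (m 2)).sum fun _ => id) = m 1 + m 2 := by
    rw [Finsupp.sum_fintype _ _ (fun _ => rfl), Fin.sum_univ_two]; rfl
  rw [h1]
  have := degree_of_mem_support hf hm
  omega

lemma hC_dehom_line (f : MvPolynomial (Fin 3) F) {d : ℕ} (hf : f.IsHomogeneous d) (s t : F) :
    aeval ![0, s, t] f = eval ![s, t] (homogeneousComponent d (dehom f)) := by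
  conv_lhs => rw [as_sum f]
  conv_rhs => rw [as_sum f]
  rw [dehom, map_sum, map_sum, map_sum, map_sum]
  apply Finset.sum_congr rfl
  intro m hm
  have hdeg : m 0 + m 1 + m 2 = d := degree_of_mem_support hf hm
  rw [show aeval ![1, X 0, X 1] (monomial m (coeff m f)) = dehom (monomial m (coeff m f)) from rfl,
    dehom_monomial]
  rw [homogeneousComponent_of_mem
    (isHomogeneous_monomial (coeff m f) (by rw [m2_degree] : (m2 (m 1) (m 2)).degree = m 1 + m 2))]
  rw [aeval_monomial_3]
  rcases Nat.eq_zero_or_pos (m 0) with h0 | h0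
  · rw [if_pos (by omega)]
    rw [eval_monomial_m2]
    simp only [Matrix.cons_val_zero, Matrix.cons_val_one, Matrix.head_cons, h0, pow_zero,
      Matrix.cons_val_two, Matrix.tail_cons, Algebra.algebraMap_self_apply]
    ring
  · rw [if_neg (by omega)]
    simp only [Matrix.cons_val_zero, Matrix.cons_val_one, Matrix.head_cons,
      zero_pow (by omega : m 0 ≠ 0), eval_zero]
    simp

lemma ev_apply (f : MvPolynomial (Fin 3) F) (Q : ↥(stdRep F)) :
    ev F f Q = aeval (Q : Fin 3 → F) f := rfl

lemma evA_apply (g : MvPolynomial (Fin 2) F) (p : Fin 2 → F) :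
    evA F g p = eval p g := by
  show aeval p g = eval p g
  rw [← coe_aeval_eq_eval]; rfl

noncomputable def tri (d : ℕ) (m : Fin 2 →₀ ℕ) : Fin 3 →₀ ℕ :=
  fin3 (d - (m 0 + m 1)) (m 0) (m 1)

noncomputable def homA (d : ℕ) (g : MvPolynomial (Fin 2) F) : MvPolynomial (Fin 3) F :=
  ∑ m ∈ g.support, monomial (tri d m) (coeff m g)

lemma homA_mem {d : ℕ} {g : MvPolynomial (Fin 2) F} (hg : g.totalDegree ≤ d) :
    (homA d g).IsHomogeneous d := by
  apply IsHomogeneous.sum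
  intro m hm
  apply isHomogeneous_monomial
  have hmd : m 0 + m 1 ≤ d := by
    rw [← sum2 m]
    exact (le_totalDegree hm).trans hg
  rw [degree3, tri]
  simp only [fin3_apply_zero, fin3_apply_one, fin3_apply_two]
  omega

lemma homA_aff {d : ℕ} (g : MvPolynomial (Fin 2) F) (p : Fin 2 → F) :
    aeval ![1, p 0, p 1] (homA d g) = eval p g := by
  rw [homA, map_sum]
  conv_rhs => rw [as_sum g]
  rw [map_sum]
  apply Finset.sum_congr rfl
  intro m _
  rw [aeval_monomial_3, eval_monomial_2, tri]
  simp only [fin3_apply_zero, fin3_apply_one, fin3_apply_two, Matrix.cons_val_zero,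
    Matrix.cons_val_one, Matrix.head_cons, Matrix.cons_val_two, Matrix.tail_cons, one_pow,
    Algebra.algebraMap_self_apply]
  ring

lemma homA_line {d : ℕ} {g : MvPolynomial (Fin 2) F} (hg : g.totalDegree ≤ d) (s t : F) :
    aeval ![0, s, t] (homA d g) = eval ![s, t] (homogeneousComponent d g) := by
  rw [homA, map_sum, homogeneousComponent_apply, map_sum]
  rw [Finset.sum_filter]
  apply Finset.sum_congr rfl
  intro m hm
  have hmd : m 0 + m 1 ≤ d := by
    rw [← sum2 m]
    exact (le_totalDegree hm).trans hg
  rw [aeval_monomial_3, tri]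
  simp only [fin3_apply_zero, fin3_apply_one, fin3_apply_two, Matrix.cons_val_zero,
    Matrix.cons_val_one, Matrix.head_cons, Matrix.cons_val_two, Matrix.tail_cons,
    Algebra.algebraMap_self_apply]
  rcases Nat.eq_or_lt_of_le hmd with heq | hlt
  · rw [if_pos (by rw [degree2]; omega), Nat.sub_eq_zero_of_le (by omega), pow_zero,
      eval_monomial_2]
    simp only [Matrix.cons_val_zero, Matrix.cons_val_one, Matrix.head_cons]
    ring
  · rw [if_neg (by rw [degree2]; omega), zero_pow (by omega)]
    simp

/-- The fundamental characterisation predicate for membership in `PRM`. -/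
def Char (d : ℕ) (u : ↥(stdRep F) → F) (g : MvPolynomial (Fin 2) F) : Prop :=
  g.totalDegree ≤ d ∧ (∀ p, u (aff p) = eval p g) ∧
    (∀ a : F, u (lpt (some a)) = eval ![1, a] (homogeneousComponent d g)) ∧
    (u (lpt none) = eval ![0, 1] (homogeneousComponent d g))

lemma aff_coe (p : Fin 2 → F) : (aff p : Fin 3 → F) = ![1, p 0, p 1] := rfl
lemma lpt_some_coe (a : F) : (lpt (some a) : Fin 3 → F) = ![0, 1, a] := rfl
lemma lpt_none_coe : ((lpt none : ↥(stdRep F)) : Fin 3 → F) = ![0, 0, 1] := rfl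

lemma mem_PRM_iff {d : ℕ} (u : ↥(stdRep F) → F) :
    u ∈ PRM F d ↔ ∃ g, Char d u g := by
  constructor
  · rintro ⟨f, hf, rfl⟩
    replace hf : f.IsHomogeneous d := hf
    refine ⟨dehom f, totalDegree_dehom hf, ?_, ?_, ?_⟩
    · intro p
      rw [ev_apply, aff_coe, ← eval_dehom]
    · intro a
      rw [ev_apply, lpt_some_coe, hC_dehom_line f hf]
    · rw [ev_apply, lpt_none_coe, hC_dehom_line f hf]
  · rintro ⟨g, hdeg, hA, hs, hn⟩
    refine ⟨homA d g, homA_mem hdeg, ?_⟩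
    apply func_eq
    · intro p
      rw [ev_apply, aff_coe, homA_aff, hA]
    · intro o
      cases o with
      | some a => rw [ev_apply, lpt_some_coe, homA_line hdeg, hs]
      | none => rw [ev_apply, lpt_none_coe, homA_line hdeg, hn]

lemma mem_RM_iff {e : ℕ} (w : (Fin 2 → F) → F) :
    w ∈ RM F e ↔ ∃ g : MvPolynomial (Fin 2) F, g.totalDegree ≤ e ∧ ∀ p, w p = eval p g := by
  constructor
  · rintro ⟨g, hg, rfl⟩
    exact ⟨g, (mem_restrictTotalDegree _ _ _).mp hg, fun p => (evA_apply g p)⟩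
  · rintro ⟨g, hg, hw⟩
    refine ⟨g, (mem_restrictTotalDegree _ _ _).mpr hg, ?_⟩
    funext p
    rw [evA_apply, ← hw]

/-! ### Homogeneous binary forms and line values -/

noncomputable def fromCoeffs (n : ℕ) (c : Fin (n + 1) → F) : MvPolynomial (Fin 2) F :=
  ∑ j : Fin (n + 1), monomial (m2 (n - (j : ℕ)) j) (c j)

lemma fromCoeffs_isHomogeneous (n : ℕ) (c : Fin (n + 1) → F) :
    (fromCoeffs n c).IsHomogeneous n := by
  apply IsHomogeneous.sum
  intro j _
  apply isHomogeneous_monomial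
  rw [m2_degree]
  have := j.isLt
  omega

lemma fromCoeffs_totalDegree (n : ℕ) (c : Fin (n + 1) → F) :
    (fromCoeffs n c).totalDegree ≤ n := by
  refine (totalDegree_finset_sum _ _).trans (Finset.sup_le ?_)
  intro j _
  refine (totalDegree_monomial_le _ _).trans ?_
  have h1 : ((m2 (n - (j : ℕ)) j).sum fun _ => id) = (n - (j : ℕ)) + j := by
    rw [Finsupp.sum_fintype _ _ (fun _ => rfl), Fin.sum_univ_two]; rfl
  rw [h1]
  have := j.isLt
  omega

lemma eval_fromCoeffs_one (n : ℕ) (c : Fin (n + 1) → F) (a : F) :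
    eval ![1, a] (fromCoeffs n c) = LMap n c (some a) := by
  rw [fromCoeffs, map_sum, LMap_some]
  apply Finset.sum_congr rfl
  intro j _
  rw [eval_monomial_m2]
  simp

lemma eval_fromCoeffs_zero (n : ℕ) (c : Fin (n + 1) → F) :
    eval ![0, 1] (fromCoeffs n c) = LMap n c none := by
  rw [fromCoeffs, map_sum, LMap_none]
  rw [Finset.sum_eq_single (Fin.last n)]
  · rw [eval_monomial_m2]
    simp [Fin.last]
  · intro j _ hj
    rw [eval_monomial_m2]
    have hjn : (j : ℕ) < n := by
      rcases Nat.lt_or_ge (j : ℕ) n with h | h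
      · exact h
      · exact absurd (Fin.ext (by have := j.isLt; omega : (j : ℕ) = n)) hj
    simp only [Matrix.cons_val_zero, Matrix.cons_val_one, Matrix.head_cons, one_pow]
    rw [zero_pow (by omega)]
    ring
  · simp

lemma homog_eq_fromCoeffs {n : ℕ} {h : MvPolynomial (Fin 2) F} (hh : h.IsHomogeneous n) :
    h = fromCoeffs n (fun j => coeff (m2 (n - (j : ℕ)) j) h) := by
  apply MvPolynomial.ext
  intro m
  rw [fromCoeffs]
  rw [coeff_sum]
  simp only [coeff_monomial]
  rcases eq_or_ne (m 0 + m 1) n with hdeg | hdeg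
  · have hm1 : m 1 < n + 1 := by omega
    rw [Finset.sum_eq_single (⟨m 1, hm1⟩ : Fin (n + 1))]
    · have hm0 : n - m 1 = m 0 := by omega
      have hEq : m2 (n - ((⟨m 1, hm1⟩ : Fin (n + 1)) : ℕ)) ((⟨m 1, hm1⟩ : Fin (n + 1)) : ℕ) = m := by
        show m2 (n - m 1) (m 1) = m
        rw [hm0]
        exact m2_eta m
      rw [if_pos hEq, hEq]
    · intro j _ hj
      rw [if_neg]
      intro hEq
      apply hj
      apply Fin.ext
      have h1 := DFunLike.congr_fun hEq 1
      simpa using h1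
    · simp
  · rw [Finset.sum_eq_zero, hh.coeff_eq_zero (by rw [degree2]; exact hdeg)]
    intro j _
    rw [if_neg]
    intro hEq
    apply hdeg
    have h0 := DFunLike.congr_fun hEq 0
    have h1 := DFunLike.congr_fun hEq 1
    simp only [m2_apply_zero, m2_apply_one] at h0 h1
    have := j.isLt
    omega

/-- line values of a homogeneous binary form lie in the range of `LMap`. -/
lemma line_mem_LMap_range {n : ℕ} {h : MvPolynomial (Fin 2) F} (hh : h.IsHomogeneous n)
    (φ : Option F → F) (hφs : ∀ a : F, φ (some a) = eval ![1, a] h)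
    (hφn : φ none = eval ![0, 1] h) : φ ∈ LinearMap.range (LMap (F := F) n) := by
  refine ⟨fun j => coeff (m2 (n - (j : ℕ)) j) h, ?_⟩
  funext o
  cases o with
  | some a => rw [hφs a, ← eval_fromCoeffs_one, ← homog_eq_fromCoeffs hh]
  | none => rw [hφn, ← eval_fromCoeffs_zero, ← homog_eq_fromCoeffs hh]

/-- Scaling evaluation of a homogeneous polynomial. -/
lemma eval_smul_homog {n : ℕ} {h : MvPolynomial (Fin 2) F} (hh : h.IsHomogeneous n)
    (c : F) (v : Fin 2 → F) : eval (c • v) h = c ^ n * eval v h := by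
  rw [eval_eq', eval_eq', Finset.mul_sum]
  apply Finset.sum_congr rfl
  intro m hm
  rw [Fin.prod_univ_two, Fin.prod_univ_two]
  simp only [Pi.smul_apply, smul_eq_mul]
  rw [mul_pow, mul_pow]
  have hdeg : m 0 + m 1 = n := degree_of_mem_support2 hh hm
  rw [← hdeg, pow_add]
  ring

lemma eval_zero_of_line_zero {n : ℕ} {h : MvPolynomial (Fin 2) F} (hh : h.IsHomogeneous n)
    (h1 : ∀ a : F, eval ![1, a] h = 0) (h0 : eval ![0, 1] h = 0) (p : Fin 2 → F) :
    eval p h = 0 := by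
  rcases eq_or_ne (p 0) 0 with hp0 | hp0
  · have hp : p = p 1 • ![0, 1] := by
      funext i; fin_cases i <;> simp [hp0]
    rw [hp, eval_smul_homog hh, h0, mul_zero]
  · have hp : p = p 0 • ![1, p 1 / p 0] := by
      funext i; fin_cases i <;> simp [mul_div_cancel₀ _ hp0]
    rw [hp, eval_smul_homog hh, h1, mul_zero]

lemma totalDegree_sub_hC {d : ℕ} {g : MvPolynomial (Fin 2) F} (hg : g.totalDegree ≤ d) :
    (g - homogeneousComponent d g).totalDegree ≤ d - 1 := by
  rw [totalDegree]
  apply Finset.sup_le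
  intro m hm
  have hcoeff : coeff m (g - homogeneousComponent d g) ≠ 0 := mem_support_iff.mp hm
  rw [coeff_sub, coeff_homogeneousComponent] at hcoeff
  rcases eq_or_ne m.degree d with hd | hd
  · rw [if_pos hd, sub_self] at hcoeff
    exact absurd rfl hcoeff
  · rw [if_neg hd, sub_zero] at hcoeff
    have h2 : (m.sum fun _ e => e) ≤ g.totalDegree := le_totalDegree (mem_support_iff.mpr hcoeff)
    have h3 : m.degree = m.sum fun _ e => e := by
      rw [degree2, sum2]
    omega

/-! ### Key homogeneous-component computations -/

lemma hC_mul_Xpow (i : Fin 2) (α : MvPolynomial (Fin 2) F) (e k : ℕ) :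
    homogeneousComponent (e + k) (α * X i ^ k) = homogeneousComponent e α * X i ^ k := by
  apply MvPolynomial.ext
  intro m
  rw [X_pow_eq_monomial, coeff_homogeneousComponent, coeff_mul_monomial', coeff_mul_monomial',
    coeff_homogeneousComponent]
  by_cases hle : Finsupp.single i k ≤ m
  · have hki : k ≤ m i := Finsupp.single_le_iff.mp hle
    have hdeg : m.degree = (m - Finsupp.single i k).degree + k := by
      rw [degree2, degree2, Finsupp.tsub_apply, Finsupp.tsub_apply]
      have hs : Finsupp.single i k 0 + Finsupp.single i k 1 = k := by
        fin_cases i <;> simp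
      have hle0 : Finsupp.single i k 0 ≤ m 0 := Finsupp.le_def.mp hle 0
      have hle1 : Finsupp.single i k 1 ≤ m 1 := Finsupp.le_def.mp hle 1
      omega
    simp only [if_pos hle, mul_one]
    by_cases hm : m.degree = e + k
    · rw [if_pos hm, if_pos (show (m - Finsupp.single i k).degree = e by omega)]
    · rw [if_neg hm, if_neg (show ¬(m - Finsupp.single i k).degree = e by omega)]
  · simp only [if_neg hle, ite_self]

lemma hC_Delta {e : ℕ} (hq2 : 2 ≤ qq) (α β : MvPolynomial (Fin 2) F)
    (hα : α.totalDegree ≤ e) (hβ : β.totalDegree ≤ e) :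
    homogeneousComponent (e + qq) (α * (X 0 ^ qq - X 0) + β * (X 1 ^ qq - X 1))
      = homogeneousComponent e α * X 0 ^ qq + homogeneousComponent e β * X 1 ^ qq := by
  have hbound : ∀ γ : MvPolynomial (Fin 2) F, γ.totalDegree ≤ e → ∀ i : Fin 2,
      homogeneousComponent (e + qq) (γ * X i) = 0 := by
    intro γ hγ i
    apply homogeneousComponent_eq_zero
    calc (γ * X i).totalDegree ≤ γ.totalDegree + (X i : MvPolynomial (Fin 2) F).totalDegree :=
        totalDegree_mul _ _
      _ ≤ e + 1 := by rw [totalDegree_X]; omega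
      _ < e + qq := by omega
  rw [mul_sub, mul_sub, map_add, map_sub, map_sub, hC_mul_Xpow 0 α e qq, hC_mul_Xpow 1 β e qq,
    hbound α hα 0, hbound β hβ 1, sub_zero, sub_zero]

lemma line_eval_Delta_some (A B : MvPolynomial (Fin 2) F) (a : F) :
    eval ![1, a] (A * X 0 ^ qq + B * X 1 ^ qq) = eval ![1, a] (X 0 * A + X 1 * B) := by
  simp only [map_add, map_mul, map_pow, eval_X, Matrix.cons_val_zero, Matrix.cons_val_one,
    Matrix.head_cons, one_pow, FiniteField.pow_card]
  ring

lemma line_eval_Delta_none (A B : MvPolynomial (Fin 2) F) :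
    eval ![0, 1] (A * X 0 ^ qq + B * X 1 ^ qq) = eval ![0, 1] (X 0 * A + X 1 * B) := by
  simp only [map_add, map_mul, map_pow, eval_X, Matrix.cons_val_zero, Matrix.cons_val_one,
    Matrix.head_cons, one_pow, zero_pow (Fintype.card_ne_zero (α := F))]
  ring

/-! ### Reduced polynomials vanishing everywhere are zero -/

lemma reduced_vanish (P : MvPolynomial (Fin 2) F)
    (hred : ∀ m ∈ P.support, m 0 < qq ∧ m 1 < qq)
    (hvan : ∀ p : Fin 2 → F, eval p P = 0) : P = 0 := by
  classical
  set T : Finset (ℕ × ℕ) := Finset.range qq ×ˢ Finset.range qq with hT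
  have hinj : Set.InjOn (fun ij : ℕ × ℕ => m2 ij.1 ij.2) T := by
    intro x _ y _ hxy
    obtain ⟨h1, h2⟩ := m2_inj hxy
    exact Prod.ext h1 h2
  have hsub : P.support ⊆ T.image (fun ij : ℕ × ℕ => m2 ij.1 ij.2) := by
    intro m hm
    obtain ⟨h0, h1⟩ := hred m hm
    refine Finset.mem_image.mpr ⟨(m 0, m 1), ?_, m2_eta m⟩
    rw [hT]
    exact Finset.mem_product.mpr ⟨Finset.mem_range.mpr h0, Finset.mem_range.mpr h1⟩
  have hEval : ∀ a b : F, ∑ j ∈ Finset.range qq,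
      (∑ i ∈ Finset.range qq, coeff (m2 i j) P * a ^ i) * b ^ j = 0 := by
    intro a b
    have e1 : eval ![a, b] P = ∑ m ∈ T.image (fun ij : ℕ × ℕ => m2 ij.1 ij.2),
        coeff m P * a ^ m 0 * b ^ m 1 := by
      rw [eval_eq' ![a, b] P]
      calc ∑ m ∈ P.support, coeff m P * ∏ i, ![a, b] i ^ m i
          = ∑ m ∈ P.support, coeff m P * a ^ m 0 * b ^ m 1 := by
            apply Finset.sum_congr rfl
            intro m _
            rw [Fin.prod_univ_two]
            simp [mul_assoc]
        _ = ∑ m ∈ T.image (fun ij : ℕ × ℕ => m2 ij.1 ij.2), coeff m P * a ^ m 0 * b ^ m 1 := by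
            apply Finset.sum_subset hsub
            intro m _ hm
            rw [notMem_support_iff.mp hm]
            ring
    rw [Finset.sum_image hinj] at e1
    have e2 : ∑ ij ∈ T, coeff (m2 ij.1 ij.2) P * a ^ (m2 ij.1 ij.2) 0 * b ^ (m2 ij.1 ij.2) 1
        = ∑ j ∈ Finset.range qq, (∑ i ∈ Finset.range qq, coeff (m2 i j) P * a ^ i) * b ^ j := by
      rw [hT, Finset.sum_product_right]
      apply Finset.sum_congr rfl
      intro j _
      rw [Finset.sum_mul]
      apply Finset.sum_congr rfl
      intro i _
      simp only [m2_apply_zero, m2_apply_one]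
    rw [← e2, ← e1, hvan]
  have hcf : ∀ i < qq, ∀ j < qq, coeff (m2 i j) P = 0 := by
    intro i hi j hj
    have h1 : ∀ a : F, ∑ i' ∈ Finset.range qq, coeff (m2 i' j) P * a ^ i' = 0 := by
      intro a
      exact coeffs_eq_zero le_rfl _ (hEval a) j hj
    exact coeffs_eq_zero le_rfl _ (fun a => h1 a) i hi
  apply MvPolynomial.ext
  intro m
  rw [coeff_zero]
  by_contra hc
  have hm : m ∈ P.support := mem_support_iff.mpr hc
  obtain ⟨h0, h1⟩ := hred m hm
  have := hcf (m 0) h0 (m 1) h1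
  rw [m2_eta m] at this
  exact hc this

/-! ### Division by the field equations -/

lemma descent (i : Fin 2) (D : ℕ) (P : MvPolynomial (Fin 2) F) (hdeg : P.totalDegree ≤ D)
    {m : Fin 2 →₀ ℕ} (hm : m ∈ P.support) (hqi : qq ≤ m i) :
    ∃ P', P = P' + monomial (m - Finsupp.single i qq) (coeff m P) * (X i ^ qq - X i)
      ∧ (∑ x ∈ P'.support, (x 0 + x 1 + 1)) < (∑ x ∈ P.support, (x 0 + x 1 + 1))
      ∧ P'.totalDegree ≤ D
      ∧ (∀ p : Fin 2 → F, eval p P' = eval p P) := by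
  classical
  have hq2 : 2 ≤ qq := Fintype.one_lt_card
  set s : Fin 2 →₀ ℕ := m - Finsupp.single i qq with hs
  set c : F := coeff m P with hc
  set m' : Fin 2 →₀ ℕ := s + Finsupp.single i 1 with hm'
  have hsm : s + Finsupp.single i qq = m :=
    tsub_add_cancel_of_le (Finsupp.single_le_iff.mpr hqi)
  have hmm' : m' ≠ m := by
    intro h
    have := DFunLike.congr_fun h i
    simp only [hm', Finsupp.add_apply, Finsupp.single_eq_same, hs, Finsupp.tsub_apply] at this
    omega
  have ht : monomial s c * (X i ^ qq - X i) = monomial m c - monomial m' c := by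
    rw [mul_sub, ← monomial_add_single, hsm, ← pow_one (X i : MvPolynomial (Fin 2) F),
      ← monomial_add_single, ← hm']
  refine ⟨P - monomial s c * (X i ^ qq - X i), by ring, ?_, ?_, ?_⟩
  · -- measure decreases
    set P' := P - monomial s c * (X i ^ qq - X i) with hP'
    have hcm : coeff m P' = 0 := by
      rw [hP', coeff_sub, ht, coeff_sub, coeff_monomial, if_pos rfl, coeff_monomial,
        if_neg hmm', hc]
      ring
    have hsupp : P'.support ⊆ insert m' (P.support.erase m) := by
      intro x hx
      rcases eq_or_ne x m' with rfl | hxm'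
      · exact Finset.mem_insert_self _ _
      rcases eq_or_ne x m with rfl | hxm
      · exact absurd hcm (mem_support_iff.mp hx)
      · apply Finset.mem_insert_of_mem
        apply Finset.mem_erase.mpr
        refine ⟨hxm, mem_support_iff.mpr ?_⟩
        have : coeff x P' = coeff x P := by
          rw [hP', coeff_sub, ht, coeff_sub, coeff_monomial, if_neg (Ne.symm hxm),
            coeff_monomial, if_neg (Ne.symm hxm')]
          ring
        rw [← this]
        exact mem_support_iff.mp hx
    have hwm' : m' 0 + m' 1 + 1 < m 0 + m 1 + 1 := by
      have h0 := DFunLike.congr_fun hsm 0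
      have h1 := DFunLike.congr_fun hsm 1
      simp only [Finsupp.add_apply, Finsupp.single_apply, hm'] at h0 h1 ⊢
      fin_cases i <;> simp_all <;> omega
    calc ∑ x ∈ P'.support, (x 0 + x 1 + 1)
        ≤ ∑ x ∈ insert m' (P.support.erase m), (x 0 + x 1 + 1) :=
          Finset.sum_le_sum_of_subset hsupp
      _ ≤ (m' 0 + m' 1 + 1) + ∑ x ∈ P.support.erase m, (x 0 + x 1 + 1) := by
          by_cases h : m' ∈ P.support.erase m
          · rw [Finset.insert_eq_self.mpr h]
            omega
          · rw [Finset.sum_insert h]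
      _ < (m 0 + m 1 + 1) + ∑ x ∈ P.support.erase m, (x 0 + x 1 + 1) := by omega
      _ = ∑ x ∈ P.support, (x 0 + x 1 + 1) := by
          rw [add_comm]
          exact Finset.sum_erase_add _ _ hm
  · -- total degree bound
    set P' := P - monomial s c * (X i ^ qq - X i) with hP'
    rw [totalDegree]
    apply Finset.sup_le
    intro x hx
    have hxP : x ∈ P.support ∨ x = m' := by
      rcases eq_or_ne x m' with rfl | hxm'
      · exact Or.inr rfl
      rcases eq_or_ne x m with rfl | hxm
      · exact Or.inl hm
      · left
        have : coeff x P' = coeff x P := by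
          rw [hP', coeff_sub, ht, coeff_sub, coeff_monomial, if_neg (Ne.symm hxm),
            coeff_monomial, if_neg (Ne.symm hxm')]
          ring
        exact mem_support_iff.mpr (by rw [← this]; exact mem_support_iff.mp hx)
    have hmD : m 0 + m 1 ≤ D := by
      rw [← sum2 m]
      exact (le_totalDegree hm).trans hdeg
    rcases hxP with hxP | rfl
    · exact (le_totalDegree hxP).trans hdeg
    · rw [sum2]
      have h0 := DFunLike.congr_fun hsm 0
      have h1 := DFunLike.congr_fun hsm 1
      simp only [Finsupp.add_apply, Finsupp.single_apply, hm'] at h0 h1 ⊢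
      fin_cases i <;> simp at h0 h1 ⊢ <;> omega
  · -- evaluation unchanged
    intro p
    rw [map_sub, map_mul, map_sub, map_pow, eval_X, FiniteField.pow_card, sub_self, mul_zero,
      sub_zero]

lemma division (D : ℕ) (P : MvPolynomial (Fin 2) F) (hvan : ∀ p : Fin 2 → F, eval p P = 0)
    (hdeg : P.totalDegree ≤ D) :
    ∃ α β : MvPolynomial (Fin 2) F, P = α * (X 0 ^ qq - X 0) + β * (X 1 ^ qq - X 1)
      ∧ α.totalDegree ≤ D - qq ∧ β.totalDegree ≤ D - qq := by
  classical
  suffices H : ∀ n (P : MvPolynomial (Fin 2) F), (∑ x ∈ P.support, (x 0 + x 1 + 1)) ≤ n →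
      (∀ p : Fin 2 → F, eval p P = 0) → P.totalDegree ≤ D →
      ∃ α β : MvPolynomial (Fin 2) F, P = α * (X 0 ^ qq - X 0) + β * (X 1 ^ qq - X 1)
        ∧ α.totalDegree ≤ D - qq ∧ β.totalDegree ≤ D - qq by
    exact H _ P le_rfl hvan hdeg
  intro n
  induction n using Nat.strong_induction_on with
  | _ n ih =>
    intro P hμ hvan hdeg
    by_cases h0 : ∃ m ∈ P.support, qq ≤ m 0
    · obtain ⟨m, hm, hq0⟩ := h0
      obtain ⟨P', hPeq, hμ', hdeg', hvan'⟩ := descent 0 D P hdeg hm hq0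
      obtain ⟨α', β', heq', hα', hβ'⟩ := ih _ (by omega) P' le_rfl
        (fun p => by rw [hvan' p]; exact hvan p) hdeg'
      refine ⟨α' + monomial (m - Finsupp.single 0 qq) (coeff m P), β', ?_, ?_, hβ'⟩
      · conv_lhs => rw [hPeq, heq']
        ring
      · refine (totalDegree_add _ _).trans (max_le hα' ?_)
        refine (totalDegree_monomial_le _ _).trans ?_
        have h1 : ((m - Finsupp.single 0 qq).sum fun _ => id)
            = (m 0 - qq) + m 1 := by
          rw [Finsupp.sum_fintype _ _ (fun _ => rfl), Fin.sum_univ_two]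
          simp [Finsupp.tsub_apply, Finsupp.single_apply]
        rw [h1]
        have hmD : m 0 + m 1 ≤ D := by
          rw [← sum2 m]; exact (le_totalDegree hm).trans hdeg
        omega
    · by_cases h1 : ∃ m ∈ P.support, qq ≤ m 1
      · obtain ⟨m, hm, hq1⟩ := h1
        obtain ⟨P', hPeq, hμ', hdeg', hvan'⟩ := descent 1 D P hdeg hm hq1
        obtain ⟨α', β', heq', hα', hβ'⟩ := ih _ (by omega) P' le_rfl
          (fun p => by rw [hvan' p]; exact hvan p) hdeg'
        refine ⟨α', β' + monomial (m - Finsupp.single 1 qq) (coeff m P), ?_, hα', ?_⟩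
        · conv_lhs => rw [hPeq, heq']
          ring
        · refine (totalDegree_add _ _).trans (max_le hβ' ?_)
          refine (totalDegree_monomial_le _ _).trans ?_
          have he1 : ((m - Finsupp.single 1 qq).sum fun _ => id)
              = m 0 + (m 1 - qq) := by
            rw [Finsupp.sum_fintype _ _ (fun _ => rfl), Fin.sum_univ_two]
            simp [Finsupp.tsub_apply, Finsupp.single_apply]
          rw [he1]
          have hmD : m 0 + m 1 ≤ D := by
            rw [← sum2 m]; exact (le_totalDegree hm).trans hdeg
          omega
      · have : P = 0 := by
          apply reduced_vanish P _ hvan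
          intro m hm
          push_neg at h0 h1
          exact ⟨by have := h0 m hm; omega, by have := h1 m hm; omega⟩
        refine ⟨0, 0, by rw [this]; ring, by simp, by simp⟩

/-! ### Construction of elements of big-degree PRM with prescribed line values -/

lemma X_mul_fromCoeffs (e : ℕ) (c' : Fin (e + 2) → F) :
    X 0 * fromCoeffs e (fun i => c' i.castSucc)
      + X 1 * monomial (m2 0 e) (c' (Fin.last (e + 1)))
      = fromCoeffs (e + 1) c' := by
  rw [fromCoeffs, fromCoeffs, Fin.sum_univ_castSucc (n := e + 1), Finset.mul_sum]
  congr 1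
  · apply Finset.sum_congr rfl
    intro j _
    rw [← pow_one (X 0 : MvPolynomial (Fin 2) F), ← monomial_single_add]
    have hj : (j : ℕ) ≤ e := by have := j.isLt; omega
    have hm : Finsupp.single (0 : Fin 2) 1 + m2 (e - (j : ℕ)) (j : ℕ)
        = m2 (e + 1 - ((j.castSucc : Fin (e + 2)) : ℕ)) ((j.castSucc : Fin (e + 2)) : ℕ) := by
      ext i
      fin_cases i <;>
        simp only [Finsupp.add_apply, Finsupp.single_apply, Fin.coe_castSucc, m2_apply_zero,
          m2_apply_one] <;> simp <;> omega
    rw [hm]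
  · rw [← pow_one (X 1 : MvPolynomial (Fin 2) F), ← monomial_single_add]
    have hm : Finsupp.single (1 : Fin 2) 1 + m2 0 e
        = m2 (e + 1 - ((Fin.last (e + 1) : Fin (e + 2)) : ℕ)) ((Fin.last (e + 1) : Fin (e + 2)) : ℕ) := by
      ext i
      fin_cases i <;>
        simp only [Finsupp.add_apply, Finsupp.single_apply, Fin.val_last, m2_apply_zero,
          m2_apply_one] <;> simp <;> omega
    rw [hm]

lemma eval_Delta_zero (A B : MvPolynomial (Fin 2) F) (p : Fin 2 → F) :
    eval p (A * (X 0 ^ qq - X 0) + B * (X 1 ^ qq - X 1)) = 0 := by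
  rw [map_add, map_mul, map_mul, map_sub, map_sub, map_pow, map_pow, eval_X, eval_X,
    FiniteField.pow_card, FiniteField.pow_card, sub_self, sub_self, mul_zero, mul_zero, add_zero]

lemma totalDegree_Delta_le (e : ℕ) (A B : MvPolynomial (Fin 2) F) (hA : A.totalDegree ≤ e)
    (hB : B.totalDegree ≤ e) :
    (A * (X 0 ^ qq - X 0) + B * (X 1 ^ qq - X 1)).totalDegree ≤ e + qq := by
  have hfactor : ∀ i : Fin 2, (X i ^ qq - X i : MvPolynomial (Fin 2) F).totalDegree ≤ qq := by
    intro i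
    refine (totalDegree_sub _ _).trans ?_
    apply max_le
    · rw [totalDegree_X_pow]
    · rw [totalDegree_X]
      have : 1 ≤ qq := Fintype.card_pos
      omega
  refine (totalDegree_add _ _).trans (max_le ?_ ?_) <;>
    exact (totalDegree_mul _ _).trans (by
      have := hfactor 0
      have := hfactor 1
      omega)

lemma mem_PRM_of_line {D : ℕ} (hqD : qq ≤ D) (hq2 : 2 ≤ qq) {g : MvPolynomial (Fin 2) F}
    (hg : g.totalDegree < D) (c' : Fin (D - qq + 2) → F) (u : ↥(stdRep F) → F)
    (hA : ∀ p, u (aff p) = eval p g)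
    (hL : ∀ o, u (lpt o) = LMap (D - qq + 1) c' o) : u ∈ PRM F D := by
  set A : MvPolynomial (Fin 2) F := fromCoeffs (D - qq) (fun i => c' i.castSucc) with hA'
  set B : MvPolynomial (Fin 2) F := monomial (m2 0 (D - qq)) (c' (Fin.last (D - qq + 1))) with hB'
  set Δ : MvPolynomial (Fin 2) F := A * (X 0 ^ qq - X 0) + B * (X 1 ^ qq - X 1) with hΔ
  have hdA : A.totalDegree ≤ D - qq := fromCoeffs_totalDegree _ _
  have hdB : B.totalDegree ≤ D - qq := (totalDegree_monomial_le _ _).trans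
    (by rw [Finsupp.sum_fintype _ _ (fun _ => rfl), Fin.sum_univ_two]; simp)
  have hAhom : A.IsHomogeneous (D - qq) := fromCoeffs_isHomogeneous _ _
  have hBhom : B.IsHomogeneous (D - qq) := isHomogeneous_monomial _ (by rw [m2_degree]; omega)
  have hDe : D = (D - qq) + qq := by omega
  have hCg2 : homogeneousComponent D (g + Δ) = homogeneousComponent (D - qq) A * X 0 ^ qq
      + homogeneousComponent (D - qq) B * X 1 ^ qq := by
    rw [map_add, homogeneousComponent_eq_zero _ _ hg, zero_add, hΔ]
    conv_lhs => rw [hDe]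
    rw [hC_Delta hq2 A B hdA hdB]
  have hCA : homogeneousComponent (D - qq) A = A := by
    rw [homogeneousComponent_of_mem hAhom, if_pos rfl]
  have hCB : homogeneousComponent (D - qq) B = B := by
    rw [homogeneousComponent_of_mem hBhom, if_pos rfl]
  rw [mem_PRM_iff]
  refine ⟨g + Δ, ?_, ?_, ?_, ?_⟩
  · refine (totalDegree_add _ _).trans (max_le (by omega) ?_)
    rw [hΔ]
    refine (totalDegree_Delta_le (D - qq) A B hdA hdB).trans (by omega)
  · intro p
    rw [map_add, hΔ, eval_Delta_zero, add_zero, hA p]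
  · intro a
    rw [hCg2, hCA, hCB, line_eval_Delta_some, X_mul_fromCoeffs, eval_fromCoeffs_one, hL (some a)]
  · rw [hCg2, hCA, hCB, line_eval_Delta_none, X_mul_fromCoeffs, eval_fromCoeffs_zero, hL none]

lemma LMap_cast {n n' : ℕ} (h : n = n') (h1 : n + 1 = n' + 1) (c : Fin (n + 1) → F) :
    LMap n' (c ∘ Fin.cast h1.symm) = LMap n c := by
  subst h
  rfl

/-! ### The congruent case: containment -/

lemma PRM_le_step {d : ℕ} (hd : 1 ≤ d) (hq2 : 2 ≤ qq) :
    PRM F d ≤ PRM F (d + (qq - 1)) := by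
  intro u hu
  obtain ⟨g, hdeg, hAp, hsome, hnone⟩ := (mem_PRM_iff u).mp hu
  set D := d + (qq - 1) with hD
  have hqD : qq ≤ D := by omega
  have hgD : g.totalDegree < D := by omega
  have hmem := line_mem_LMap_range (homogeneousComponent_isHomogeneous d g)
    (resL u) (fun a => by rw [resL_apply, hsome]) (by rw [resL_apply, hnone])
  obtain ⟨c, hc⟩ := hmem
  have he : d = D - qq + 1 := by omega
  have he1 : d + 1 = (D - qq + 1) + 1 := by omega
  apply mem_PRM_of_line hqD hq2 hgD (c ∘ Fin.cast he1.symm) u hAp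
  intro o
  rw [LMap_cast he he1 c, hc]
  rfl

lemma PRM_le_of_modEq {d d' : ℕ} (hq2 : 2 ≤ qq) (hd : 1 ≤ d) (hdd : d ≤ d')
    (hmod : (qq - 1) ∣ (d' - d)) : PRM F d ≤ PRM F d' := by
  obtain ⟨k, hk⟩ := hmod
  have hd' : d' = d + (qq - 1) * k := by omega
  subst hd'
  clear hk hdd
  induction k with
  | zero => simp
  | succ k ihk =>
    refine ihk.trans ?_
    have hstep := PRM_le_step (F := F) (d := d + (qq - 1) * k) (by omega) hq2
    have heq : d + (qq - 1) * k + (qq - 1) = d + (qq - 1) * (k + 1) := by ring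
    rwa [heq] at hstep

/-! ### The kernel of the line restriction on the intersection -/

lemma finrank_ker_eq {d₁ d₂ : ℕ} (h1 : 1 ≤ d₁) (h12 : d₁ < d₂) :
    Module.finrank F ↥(LinearMap.ker (resL.comp (PRM F d₁ ⊓ PRM F d₂).subtype))
      = Module.finrank F ↥(RM F (d₁ - 1)) := by
  classical
  set I := PRM F d₁ ⊓ PRM F d₂ with hI
  set π := resL.comp I.subtype with hπ
  set θ : ↥(LinearMap.ker π) →ₗ[F] ((Fin 2 → F) → F) :=
    resA.comp (I.subtype.comp (LinearMap.ker π).subtype) with hθ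
  have hresL : ∀ x : ↥(LinearMap.ker π), resL (((x : ↥I) : ↥(stdRep F) → F)) = 0 := by
    intro x
    exact x.2
  have hker : LinearMap.ker θ = ⊥ := by
    rw [eq_bot_iff]
    intro x hx
    rw [LinearMap.mem_ker] at hx
    have hu : ((x : ↥I) : ↥(stdRep F) → F) = 0 := by
      apply func_eq
      · intro p
        exact congrFun hx p
      · intro o
        exact congrFun (hresL x) o
    rw [Submodule.mem_bot]
    exact Subtype.ext (Subtype.ext hu)
  have hrange : LinearMap.range θ = RM F (d₁ - 1) := by
    apply le_antisymm
    · rintro w ⟨x, rfl⟩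
      obtain ⟨g, hdeg, hAp, hsome, hnone⟩ := (mem_PRM_iff ((x : ↥I) : ↥(stdRep F) → F)).mp
        (x : ↥I).2.1
      have hxl := hresL x
      have hT : ∀ p, eval p (homogeneousComponent d₁ g) = 0 := by
        apply eval_zero_of_line_zero (homogeneousComponent_isHomogeneous d₁ g)
        · intro a
          rw [← hsome a]
          simpa using congrFun hxl (some a)
        · rw [← hnone]
          simpa using congrFun hxl none
      rw [mem_RM_iff]
      refine ⟨g - homogeneousComponent d₁ g, totalDegree_sub_hC hdeg, ?_⟩
      intro p
      rw [map_sub, hT p, sub_zero]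
      exact hAp p
    · intro w hw
      obtain ⟨g, hgdeg, hgw⟩ := (mem_RM_iff w).mp hw
      set u : ↥(stdRep F) → F := glue w 0 with hu
      have hgd1 : g.totalDegree < d₁ := by omega
      have hchar : ∀ d : ℕ, d₁ ≤ d → Char d u g := by
        intro d hd
        refine ⟨hgdeg.trans (by omega), ?_, ?_, ?_⟩
        · intro p
          rw [hu, glue_aff, hgw p]
        · intro a
          rw [hu, glue_some, homogeneousComponent_eq_zero _ _ (by omega), map_zero]
          rfl
        · rw [hu, glue_none, homogeneousComponent_eq_zero _ _ (by omega), map_zero]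
          rfl
      have hu1 : u ∈ PRM F d₁ := (mem_PRM_iff u).mpr ⟨g, hchar d₁ le_rfl⟩
      have hu2 : u ∈ PRM F d₂ := (mem_PRM_iff u).mpr ⟨g, hchar d₂ (le_of_lt h12)⟩
      have huk : resL u = 0 := by
        funext o
        cases o with
        | some a => rw [resL_apply, hu, glue_some]
        | none => rw [resL_apply, hu, glue_none]
      refine ⟨⟨⟨u, ⟨hu1, hu2⟩⟩, ?_⟩, ?_⟩
      · rw [LinearMap.mem_ker]
        exact huk
      · funext p
        show resA u p = w p
        rw [resA_apply, hu, glue_aff]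
  have hinj : Function.Injective θ := by
    intro x y hxy
    apply Subtype.ext
    apply Subtype.ext
    apply func_eq
    · intro p
      exact congrFun hxy p
    · intro o
      exact (congrFun (hresL x) o).trans (congrFun (hresL y) o).symm
  have h2 : Module.finrank F ↥(LinearMap.ker π) = Module.finrank F ↥(LinearMap.range θ) :=
    (LinearEquiv.ofInjective θ hinj).finrank_eq
  rw [h2, hrange]

lemma finrank_I {d₁ d₂ : ℕ} (h1 : 1 ≤ d₁) (h12 : d₁ < d₂) :
    Module.finrank F ↥(PRM F d₁ ⊓ PRM F d₂)
      = Module.finrank F ↥(RM F (d₁ - 1))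
        + Module.finrank F ↥(Submodule.map resL (PRM F d₁ ⊓ PRM F d₂)) := by
  have h := LinearMap.finrank_range_add_finrank_ker (resL.comp (PRM F d₁ ⊓ PRM F d₂).subtype)
  rw [LinearMap.range_comp, Submodule.range_subtype, finrank_ker_eq h1 h12] at h
  omega

/-! ### The image of the line restriction on the intersection -/

lemma caseA_image {d₁ d₂ : ℕ} (h12 : d₁ < d₂) (hd2 : d₂ ≤ qq - 1) :
    Submodule.map resL (PRM F d₁ ⊓ PRM F d₂) = ⊥ := by
  rw [eq_bot_iff]
  rintro φ ⟨u, ⟨hu1, hu2⟩, rfl⟩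
  obtain ⟨g₁, hdeg₁, hAp₁, hsome₁, hnone₁⟩ := (mem_PRM_iff u).mp hu1
  obtain ⟨g₂, hdeg₂, hAp₂, hsome₂, hnone₂⟩ := (mem_PRM_iff u).mp hu2
  have hvan : ∀ p : Fin 2 → F, eval p (g₂ - g₁) = 0 := by
    intro p
    rw [map_sub, ← hAp₂ p, ← hAp₁ p, sub_self]
  have hdegP : (g₂ - g₁).totalDegree ≤ d₂ :=
    (totalDegree_sub _ _).trans (max_le hdeg₂ (hdeg₁.trans (le_of_lt h12)))
  have hred : ∀ m ∈ (g₂ - g₁).support, m 0 < qq ∧ m 1 < qq := by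
    intro m hm
    have := (le_totalDegree hm).trans hdegP
    rw [sum2] at this
    constructor <;> omega
  have hP : g₂ - g₁ = 0 := reduced_vanish _ hred hvan
  have hgg : g₂ = g₁ := by
    have := sub_eq_zero.mp hP
    exact this
  have hCz : homogeneousComponent d₂ g₂ = 0 := by
    rw [hgg]
    exact homogeneousComponent_eq_zero _ _ (lt_of_le_of_lt hdeg₁ h12)
  rw [Submodule.mem_bot]
  funext o
  cases o with
  | some a => rw [resL_apply, hsome₂ a, hCz, map_zero]; rfl
  | none => rw [resL_apply, hnone₂, hCz, map_zero]; rfl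

lemma caseBC_image {d₁ d₂ : ℕ} (hq2 : 2 ≤ qq) (h1 : 1 ≤ d₁) (h12 : d₁ < d₂) (hqd : qq ≤ d₂) :
    Submodule.map resL (PRM F d₁ ⊓ PRM F d₂)
      = LinearMap.range (LMap (F := F) d₁) ⊓ LinearMap.range (LMap (F := F) (d₂ - qq + 1)) := by
  apply le_antisymm
  · rintro φ ⟨u, ⟨hu1, hu2⟩, rfl⟩
    obtain ⟨g₁, hdeg₁, hAp₁, hsome₁, hnone₁⟩ := (mem_PRM_iff u).mp hu1
    obtain ⟨g₂, hdeg₂, hAp₂, hsome₂, hnone₂⟩ := (mem_PRM_iff u).mp hu2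
    constructor
    · exact line_mem_LMap_range (homogeneousComponent_isHomogeneous d₁ g₁) (resL u)
        (fun a => by rw [resL_apply, hsome₁]) (by rw [resL_apply, hnone₁])
    · have hvan : ∀ p : Fin 2 → F, eval p (g₂ - g₁) = 0 := by
        intro p
        rw [map_sub, ← hAp₂ p, ← hAp₁ p, sub_self]
      have hdegP : (g₂ - g₁).totalDegree ≤ d₂ :=
        (totalDegree_sub _ _).trans (max_le hdeg₂ (hdeg₁.trans (le_of_lt h12)))
      obtain ⟨α, β, heq, hα, hβ⟩ := division d₂ (g₂ - g₁) hvan hdegP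
      have hCg₂ : homogeneousComponent d₂ g₂
          = homogeneousComponent (d₂ - qq) α * X 0 ^ qq
            + homogeneousComponent (d₂ - qq) β * X 1 ^ qq := by
        have hg₂ : g₂ = g₁ + (g₂ - g₁) := by ring
        rw [hg₂, map_add, homogeneousComponent_eq_zero _ _ (lt_of_le_of_lt hdeg₁ h12), zero_add,
          heq]
        conv_lhs => rw [show d₂ = (d₂ - qq) + qq from by omega]
        rw [hC_Delta hq2 α β hα hβ]
      have hhom : (X 0 * homogeneousComponent (d₂ - qq) α
          + X 1 * homogeneousComponent (d₂ - qq) β).IsHomogeneous (d₂ - qq + 1) := by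
        have ha := (isHomogeneous_X F 0).mul (homogeneousComponent_isHomogeneous (d₂ - qq) α)
        have hb := (isHomogeneous_X F 1).mul (homogeneousComponent_isHomogeneous (d₂ - qq) β)
        rw [Nat.add_comm] at ha hb
        exact ha.add hb
      exact line_mem_LMap_range hhom (resL u)
        (fun a => by
          rw [resL_apply, hsome₂, hCg₂, line_eval_Delta_some])
        (by rw [resL_apply, hnone₂, hCg₂, line_eval_Delta_none])
  · rintro φ ⟨⟨c, hc⟩, ⟨c', hc'⟩⟩
    set g₁ := fromCoeffs d₁ c with hg₁
    set u : ↥(stdRep F) → F := glue (fun p => eval p g₁) φ with hu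
    have hCeq : homogeneousComponent d₁ g₁ = g₁ := by
      rw [homogeneousComponent_of_mem (fromCoeffs_isHomogeneous d₁ c), if_pos rfl]
    have hu1 : u ∈ PRM F d₁ := by
      rw [mem_PRM_iff]
      refine ⟨g₁, fromCoeffs_totalDegree _ _, ?_, ?_, ?_⟩
      · intro p
        rw [hu, glue_aff]
      · intro a
        rw [hu, glue_some, hCeq, hg₁, eval_fromCoeffs_one, ← hc]
      · rw [hu, glue_none, hCeq, hg₁, eval_fromCoeffs_zero, ← hc]
    have hu2 : u ∈ PRM F d₂ := by
      apply mem_PRM_of_line hqd hq2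
        (lt_of_le_of_lt (fromCoeffs_totalDegree d₁ c) h12) c' u
      · intro p
        rw [hu, glue_aff]
      · intro o
        rw [hu]
        cases o with
        | some a => rw [glue_some, ← hc']
        | none => rw [glue_none, ← hc']
    refine ⟨u, ⟨hu1, hu2⟩, ?_⟩
    funext o
    cases o with
    | some a => rw [resL_apply, hu, glue_some]
    | none => rw [resL_apply, hu, glue_none]

end S7

theorem stmt7 {F : Type*} [Field F] [Fintype F] (q d₁ d₂ : ℕ)
    (hq : Fintype.card F = q) (h1 : 1 ≤ d₁) (h12 : d₁ < d₂) (h2 : d₂ ≤ 2 * (q - 1)) :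
    (d₁ ≡ d₂ [MOD q - 1] →
      Module.finrank F ↥(PRM F d₁ ⊓ PRM F d₂) = Module.finrank F ↥(PRM F d₁)) ∧
    (¬ d₁ ≡ d₂ [MOD q - 1] →
      ((d₂ ≤ q - 1 →
        Module.finrank F ↥(PRM F d₁ ⊓ PRM F d₂) = Module.finrank F ↥(RM F (d₁ - 1))) ∧
      (d₁ ≤ q - 1 ∧ q - 1 < d₂ →
        Module.finrank F ↥(PRM F d₁ ⊓ PRM F d₂) =
          Module.finrank F ↥(RM F (d₁ - 1)) + min d₁ (d₂ - (q - 1))) ∧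
      (q ≤ d₁ →
        Module.finrank F ↥(PRM F d₁ ⊓ PRM F d₂) =
          Module.finrank F ↥(RM F (d₁ - 1)) + d₂ - q + 2))) := by
  subst hq
  have hq2 : 2 ≤ Fintype.card F := Fintype.one_lt_card
  constructor
  · intro hmod
    have hle : PRM F d₁ ≤ PRM F d₂ :=
      S7.PRM_le_of_modEq hq2 h1 (le_of_lt h12) ((Nat.modEq_iff_dvd' (le_of_lt h12)).mp hmod)
    rw [inf_eq_left.mpr hle]
  · intro hmod
    refine ⟨?_, ?_, ?_⟩
    · intro hd2le
      rw [S7.finrank_I h1 h12, S7.caseA_image h12 hd2le, finrank_bot, add_zero]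
    · rintro ⟨hd1le, hd2gt⟩
      have hqd : Fintype.card F ≤ d₂ := by omega
      rw [S7.finrank_I h1 h12, S7.caseBC_image hq2 h1 h12 hqd]
      have hc1 : d₂ - Fintype.card F + 1 + 1 ≤ Fintype.card F := by omega
      have hne : d₁ ≠ d₂ - Fintype.card F + 1 := by
        intro h
        apply hmod
        have hthis : d₂ - d₁ = Fintype.card F - 1 := by omega
        rw [Nat.modEq_iff_dvd' (le_of_lt h12), hthis]
      rcases Nat.lt_or_ge d₁ (d₂ - Fintype.card F + 1) with hlt | hge
      · rw [S7.finrank_LMap_inf hlt hc1]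
        have hmin : min d₁ (d₂ - (Fintype.card F - 1)) = d₁ := by omega
        rw [hmin]
      · have hgt : d₂ - Fintype.card F + 1 < d₁ := by omega
        rw [inf_comm, S7.finrank_LMap_inf hgt (by omega : d₁ + 1 ≤ Fintype.card F)]
        have hmin : min d₁ (d₂ - (Fintype.card F - 1)) = d₂ - Fintype.card F + 1 := by omega
        rw [hmin]
    · intro hqd1
      have hqd : Fintype.card F ≤ d₂ := by omega
      rw [S7.finrank_I h1 h12, S7.caseBC_image hq2 h1 h12 hqd, S7.LMap_range_top hqd1,
        top_inf_eq, S7.finrank_LMap_range (by omega)]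
      omega
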